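/- arXiv:1411.1698 — 2 statements merged into one kernel-verified Lean document; each statement's English description precedes it below -/
import Mathlib

section
/- For every x ∈ [0.37613, 0.58870], the equation w₂(x,θ) = 0 has a unique solution θ ∈ ℝ. Furthermore, the system of equations w₁(x,θ) = 0 and w₂(x,θ) = 0 has a unique solution (x,θ) with x ∈ [0.37613, 0.58870]. -/
/-- The Gaussian error function `erf x = (2/√π) ∫₀ˣ exp(−t²) dt`. -/
noncomputable def erf (x : ℝ) : ℝ :=
  (2 / Real.sqrt Real.pi) * ∫ t in (0:ℝ)..x, Real.exp (-t ^ 2)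

/-- `w₁(x,θ) = −2x² + θ² + log(1 + erf(2x+θ))`. -/
noncomputable def w₁ (x θ : ℝ) : ℝ :=
  -2 * x ^ 2 + θ ^ 2 + Real.log (1 + erf (2 * x + θ))

/-- `w₂(x,θ) = θ + (1/√π)·exp(−(2x+θ)²)/(1 + erf(2x+θ))`. -/
noncomputable def w₂ (x θ : ℝ) : ℝ :=
  θ + (1 / Real.sqrt Real.pi) * (Real.exp (-(2 * x + θ) ^ 2) / (1 + erf (2 * x + θ)))

open Real MeasureTheory Set Filter intervalIntegral Topology Finset

noncomputable def Ef (u : ℝ) : ℝ := Real.exp (-u ^ 2)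
noncomputable def Sf (u : ℝ) : ℝ := 1 + erf u
noncomputable def Gf (u : ℝ) : ℝ := (1 / Real.sqrt Real.pi) * (Ef u / Sf u)

lemma Ef_pos (u : ℝ) : 0 < Ef u := Real.exp_pos _

lemma continuous_Ef : Continuous Ef := by
  unfold Ef; fun_prop

lemma integrable_Ef : Integrable Ef := by
  have := integrable_exp_neg_mul_sq (b := 1) one_pos
  unfold Ef; simpa using this

lemma integral_Ef : ∫ t, Ef t = Real.sqrt π := by
  have := integral_gaussian 1
  simpa [Ef] using this

lemma sqrt_pi_pos : 0 < Real.sqrt π := Real.sqrt_pos.2 Real.pi_pos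

lemma integral_Ef_Iic_zero : ∫ t in Iic (0:ℝ), Ef t = Real.sqrt π / 2 := by
  have h1 : (∫ t in Iic (0:ℝ), Ef t) = ∫ t in Ioi (0:ℝ), Ef t := by
    have := integral_comp_neg_Iic (0:ℝ) Ef
    rw [neg_zero] at this
    rw [← this]
    apply setIntegral_congr_fun measurableSet_Iic
    intro t _; simp [Ef]
  have h2 := integral_Iic_add_Ioi (b := (0:ℝ))
    integrable_Ef.integrableOn integrable_Ef.integrableOn
  rw [integral_Ef] at h2
  linarith [h1, h2]

lemma Sf_eq (u : ℝ) : Sf u = (2 / Real.sqrt π) * ∫ t in Iic u, Ef t := by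
  have hs : (∫ t in Iic u, Ef t) - ∫ t in Iic (0:ℝ), Ef t = ∫ t in (0:ℝ)..u, Ef t :=
    integral_Iic_sub_Iic integrable_Ef.integrableOn integrable_Ef.integrableOn
  have : (∫ t in Iic u, Ef t) = Real.sqrt π / 2 + ∫ t in (0:ℝ)..u, Ef t := by
    rw [← integral_Ef_Iic_zero]; linarith
  rw [Sf, erf, this]
  have h0 : Real.sqrt π ≠ 0 := ne_of_gt sqrt_pi_pos
  have : (∫ t in (0:ℝ)..u, Real.exp (-t^2)) = ∫ t in (0:ℝ)..u, Ef t := by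
    simp [Ef]
  rw [this]; field_simp

lemma integral_Ef_Iic_pos (u : ℝ) : 0 < ∫ t in Iic u, Ef t := by
  have h1 : (0:ℝ) < ∫ t in (u-1)..u, Ef t := by
    apply intervalIntegral_pos_of_pos (f := Ef)
    · exact continuous_Ef.intervalIntegrable _ _
    · exact fun x => Ef_pos x
    · linarith
  have h2 : (∫ t in (u-1)..u, Ef t) ≤ ∫ t in Iic u, Ef t := by
    rw [intervalIntegral.integral_of_le (by linarith : u - 1 ≤ u)]
    apply setIntegral_mono_set integrable_Ef.integrableOn
    · exact Eventually.of_forall fun x => (Ef_pos x).le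
    · exact HasSubset.Subset.eventuallyLE (fun x hx => hx.2)
  linarith

lemma Sf_pos (u : ℝ) : 0 < Sf u := by
  rw [Sf_eq]
  exact mul_pos (by positivity) (integral_Ef_Iic_pos u)



-- derivative of Ef
lemma hasDerivAt_Ef (u : ℝ) : HasDerivAt Ef (-2*u * Ef u) u := by
  have h : HasDerivAt (fun t : ℝ => -t^2) (-2*u) u := by
    exact (hasDerivAt_pow 2 u).neg.congr_deriv (by simp)
  unfold Ef; simpa [mul_comm, Function.comp_def] using (Real.hasDerivAt_exp (-u^2)).comp u h

lemma hasDerivAt_erf (u : ℝ) :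
    HasDerivAt erf (2 / Real.sqrt π * Ef u) u := by
  have h : HasDerivAt (fun x => ∫ t in (0:ℝ)..x, Real.exp (-t^2)) (Ef u) u := by
    have := intervalIntegral.integral_hasDerivAt_right
      (f := fun t => Real.exp (-t^2)) (a := (0:ℝ)) (b := u)
      ((continuous_Ef.intervalIntegrable 0 u : IntervalIntegrable Ef volume 0 u))
      (continuous_Ef.stronglyMeasurableAtFilter _ _)
      continuous_Ef.continuousAt
    exact this
  have := h.const_mul (2 / Real.sqrt π)
  unfold erf; simpa using this

lemma hasDerivAt_Sf (u : ℝ) : HasDerivAt Sf (2 / Real.sqrt π * Ef u) u := by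
  unfold Sf; simpa using (hasDerivAt_erf u).const_add 1

lemma integrable_tEf : Integrable (fun t : ℝ => t * Ef t) := by
  have := integrable_mul_exp_neg_mul_sq (b := 1) one_pos
  simpa [Ef] using this

lemma tendsto_neg_sq_atBot : Tendsto (fun u : ℝ => -u^2) atBot atBot := by
  apply tendsto_atBot_mono' atBot _ tendsto_id
  filter_upwards [Iic_mem_atBot (-1 : ℝ)] with u hu
  simp only [id]
  nlinarith [hu.out]

lemma tendsto_Ef_atBot : Tendsto Ef atBot (𝓝 0) := by
  have := Real.tendsto_exp_atBot.comp tendsto_neg_sq_atBot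
  unfold Ef; simpa [Function.comp_def] using this

-- FTC on Iic : ∫_{-∞}^u -2t e^{-t²} = e^{-u²}
lemma integral_deriv_Ef (u : ℝ) : ∫ t in Iic u, (-2*t * Ef t) = Ef u := by
  have h := integral_Iic_of_hasDerivAt_of_tendsto' (f := Ef)
    (f' := fun t => -2*t * Ef t) (a := u)
    (fun x _ => hasDerivAt_Ef x)
    (by
      have : Integrable (fun t : ℝ => -2*t*Ef t) := by
        simpa [mul_assoc] using integrable_tEf.const_mul (-2)
      exact this.integrableOn)
    tendsto_Ef_atBot
  rw [h]; ring

lemma key_pos (u : ℝ) : 0 < Ef u + 2*u * ∫ t in Iic u, Ef t := by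
  set c := ∫ t in Iic u, Ef t with hc
  set g : ℝ → ℝ := fun t => -2*t*Ef t + 2*u*Ef t with hg
  have hEint : Integrable (fun t : ℝ => -2*t*Ef t) := by
    simpa [mul_assoc] using integrable_tEf.const_mul (-2)
  have hgint : Integrable g := by
    apply hEint.add
    simpa [mul_assoc] using integrable_Ef.const_mul (2*u)
  have hval : ∫ t in Iic u, g t = Ef u + 2*u*c := by
    rw [hg]
    rw [integral_add (hEint.integrableOn) ((integrable_Ef.const_mul (2*u)).integrableOn)]
    rw [integral_deriv_Ef]
    congr 1
    rw [MeasureTheory.integral_const_mul]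
  have hgcont : Continuous g := by
    apply Continuous.add
    · exact (continuous_const.mul continuous_id).mul continuous_Ef
    · exact continuous_const.mul continuous_Ef
  have hpos1 : 0 < ∫ t in (u-1)..(u-1/2), g t := by
    apply intervalIntegral_pos_of_pos_on (hgcont.intervalIntegrable _ _)
    · intro x hx
      have h1 : x < u := by rcases hx with ⟨_, h2⟩; linarith
      have := Ef_pos x
      simp only [hg]
      nlinarith
    · linarith
  have hmono : (∫ t in (u-1)..(u-1/2), g t) ≤ ∫ t in Iic u, g t := by
    rw [intervalIntegral.integral_of_le (by linarith : u - 1 ≤ u - 1/2)]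
    apply setIntegral_mono_set hgint.integrableOn
    · apply ae_restrict_of_forall_mem measurableSet_Iic
      intro t ht
      have := Ef_pos t
      have h1 : t ≤ u := ht
      simp only [hg, Pi.zero_apply]
      nlinarith
    · apply HasSubset.Subset.eventuallyLE
      intro x hx
      exact le_trans hx.2 (by linarith)
  rw [hval] at hmono
  linarith

lemma sqrtpi_Sf (u : ℝ) : Real.sqrt π * Sf u = 2 * ∫ t in Iic u, Ef t := by
  rw [Sf_eq]
  have h0 : Real.sqrt π ≠ 0 := ne_of_gt sqrt_pi_pos
  field_simp

lemma Gf_eq (u : ℝ) : Gf u = Ef u / (2 * ∫ t in Iic u, Ef t) := by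
  have h0 : Real.sqrt π ≠ 0 := ne_of_gt sqrt_pi_pos
  have hS : Sf u ≠ 0 := ne_of_gt (Sf_pos u)
  have hI : (∫ t in Iic u, Ef t) ≠ 0 := ne_of_gt (integral_Ef_Iic_pos u)
  rw [Gf, ← sqrtpi_Sf]
  field_simp

lemma Gf_pos (u : ℝ) : 0 < Gf u := by
  rw [Gf_eq]
  exact div_pos (Ef_pos u) (by linarith [integral_Ef_Iic_pos u])

lemma K1 (u : ℝ) : 0 < u + Gf u := by
  have hI := integral_Ef_Iic_pos u
  have hk := key_pos u
  have h : u + Gf u = (Ef u + 2*u*∫ t in Iic u, Ef t) / (2 * ∫ t in Iic u, Ef t) := by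
    rw [Gf_eq]
    field_simp
    ring
  rw [h]
  exact div_pos hk (by linarith)

noncomputable def Hf (u : ℝ) : ℝ :=
  2*(Ef u)^2 + 2*Real.sqrt π*u*Ef u*Sf u - π*(Sf u)^2
noncomputable def Bf (u : ℝ) : ℝ :=
  2*u*Ef u + Real.sqrt π*(1+2*u^2)*Sf u
noncomputable def ff (t : ℝ) : ℝ := -t * Ef t / (1+2*t^2)
noncomputable def ff' (t : ℝ) : ℝ := Ef t * (4*t^4+4*t^2-1)/(1+2*t^2)^2

lemma denom_pos (t : ℝ) : (0:ℝ) < 1 + 2*t^2 := by positivity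

lemma hasDerivAt_ff (t : ℝ) : HasDerivAt ff (ff' t) t := by
  have h1 : HasDerivAt (fun t : ℝ => -t * Ef t) ((2*t^2-1) * Ef t) t := by
    have := ((hasDerivAt_id t).neg.mul (hasDerivAt_Ef t))
    refine this.congr_deriv ?_
    unfold Ef; simp [id_eq]; ring
  have h2 : HasDerivAt (fun t : ℝ => 1+2*t^2) (4*t) t := by
    have := ((hasDerivAt_pow 2 t).const_mul 2).const_add 1
    refine this.congr_deriv ?_
    simp; ring
  have := h1.div h2 (ne_of_gt (denom_pos t))
  refine this.congr_deriv ?_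
  unfold ff' Ef
  field_simp
  ring

lemma ff'_int : Integrable ff' := by
  apply Integrable.mono' integrable_Ef
  · apply Continuous.aestronglyMeasurable
    unfold ff'
    apply Continuous.div
    · exact continuous_Ef.mul (by continuity)
    · continuity
    · exact fun t => by positivity
  · filter_upwards [] with t
    unfold ff'
    rw [Real.norm_eq_abs, abs_div, abs_mul]
    have hE := Ef_pos t
    have hd := denom_pos t
    rw [abs_of_pos hE, abs_of_pos (by positivity : (0:ℝ) < (1+2*t^2)^2)]
    rw [div_le_iff₀ (by positivity)]
    have : |4*t^4+4*t^2-1| ≤ (1+2*t^2)^2 := by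
      rw [abs_le]; constructor <;> nlinarith [sq_nonneg t, sq_nonneg (t^2)]
    calc Ef t * |4*t^4+4*t^2-1| ≤ Ef t * (1+2*t^2)^2 := by
          exact mul_le_mul_of_nonneg_left this hE.le
      _ = Ef t * (1+2*t^2)^2 := rfl

lemma tendsto_ff : Tendsto ff atBot (𝓝 0) := by
  refine squeeze_zero_norm (fun t => ?_) tendsto_Ef_atBot
  unfold ff
  rw [Real.norm_eq_abs, abs_div, abs_mul, abs_neg]
  have hE := Ef_pos t
  have hd := denom_pos t
  rw [abs_of_pos hE, abs_of_pos hd, div_le_iff₀ hd]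
  have h1 : |t| ≤ 1 + 2*t^2 := by
    nlinarith [abs_nonneg t, sq_abs t, sq_nonneg (|t|-1)]
  nlinarith

lemma integral_ff' (u : ℝ) : ∫ t in Iic u, ff' t = ff u := by
  have h := integral_Iic_of_hasDerivAt_of_tendsto' (f := ff) (f' := ff') (a := u)
    (fun x _ => hasDerivAt_ff x) ff'_int.integrableOn tendsto_ff
  rw [h]; ring

lemma I_gt_ff (u : ℝ) : ff u < ∫ t in Iic u, Ef t := by
  have hdiff : Integrable (fun t => Ef t - ff' t) := integrable_Ef.sub ff'_int
  have hval : ∫ t in Iic u, (Ef t - ff' t) = (∫ t in Iic u, Ef t) - ff u := by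
    rw [integral_sub integrable_Ef.integrableOn ff'_int.integrableOn, integral_ff']
  have hposint : ∀ t : ℝ, 0 < Ef t - ff' t := by
    intro t
    have hE := Ef_pos t
    have hd := denom_pos t
    unfold ff'
    rw [sub_pos, div_lt_iff₀ (by positivity)]
    nlinarith
  have hcont : Continuous (fun t => Ef t - ff' t) := by
    apply continuous_Ef.sub
    apply Continuous.div
    · exact continuous_Ef.mul (by continuity)
    · continuity
    · exact fun t => by positivity
  have hpos1 : 0 < ∫ t in (u-1)..u, (Ef t - ff' t) := by
    apply intervalIntegral_pos_of_pos (hcont.intervalIntegrable _ _)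
    · exact hposint
    · linarith
  have hmono : (∫ t in (u-1)..u, (Ef t - ff' t)) ≤ ∫ t in Iic u, (Ef t - ff' t) := by
    rw [intervalIntegral.integral_of_le (by linarith : u - 1 ≤ u)]
    apply setIntegral_mono_set hdiff.integrableOn
    · apply ae_restrict_of_forall_mem measurableSet_Iic
      intro t _
      exact (hposint t).le
    · exact HasSubset.Subset.eventuallyLE (fun x hx => hx.2)
  rw [hval] at hmono
  linarith

lemma Bf_pos (u : ℝ) : 0 < Bf u := by
  have h1 := I_gt_ff u
  have hd := denom_pos u
  have hE := Ef_pos u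
  unfold Bf
  have hsp := sqrtpi_Sf u
  have hff : (1+2*u^2) * ff u = -u * Ef u := by
    unfold ff; field_simp
  nlinarith [mul_pos hd (sub_pos.mpr h1), hsp, hff]

lemma sq_sqrt_pi : Real.sqrt π ^ 2 = π := Real.sq_sqrt Real.pi_pos.le

lemma hasDerivAt_Hf (u : ℝ) : HasDerivAt Hf (-2 * Ef u * Bf u) u := by
  have hE := hasDerivAt_Ef u
  have hS := hasDerivAt_Sf u
  have h1 : HasDerivAt (fun u => 2*(Ef u)^2)
      (2*(2*Ef u*(-2*u*Ef u))) u := by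
    exact ((hE.pow 2).const_mul 2).congr_deriv (by ring)
  have h2 : HasDerivAt (fun u => 2*Real.sqrt π*u*Ef u*Sf u)
      ((2*Real.sqrt π*(Ef u) + 2*Real.sqrt π*u*(-2*u*Ef u))*Sf u
        + 2*Real.sqrt π*u*Ef u*(2/Real.sqrt π*Ef u)) u := by
    have ha : HasDerivAt (fun u : ℝ => 2*Real.sqrt π*u*Ef u)
        (2*Real.sqrt π*(Ef u) + 2*Real.sqrt π*u*(-2*u*Ef u)) u := by
      have := ((hasDerivAt_id u).const_mul (2*Real.sqrt π)).mul hE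
      exact this.congr_deriv (by simp only [id_eq]; ring)
    exact ha.mul hS
  have h3 : HasDerivAt (fun u => π*(Sf u)^2) (π*(2*Sf u*(2/Real.sqrt π*Ef u))) u := by
    exact ((hS.pow 2).const_mul π).congr_deriv (by ring)
  have := (h1.add h2).sub h3
  apply this.congr_deriv
  have hsp : Real.sqrt π ≠ 0 := ne_of_gt sqrt_pi_pos
  unfold Bf
  set sp := Real.sqrt π with hspdef
  rw [← sq_sqrt_pi, ← hspdef]
  field_simp
  ring

lemma strictAnti_Hf : StrictAnti Hf := by
  apply strictAnti_of_deriv_neg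
  intro u
  rw [(hasDerivAt_Hf u).deriv]
  have := Ef_pos u
  have := Bf_pos u
  nlinarith

lemma tendsto_Hf : Tendsto Hf atBot (𝓝 0) := by
  have hb : ∀ᶠ u in atBot, ‖Hf u‖ ≤ 3*(Ef u)^2 + 2*((2*u^2) * Real.exp (-(2*u^2))) := by
    filter_upwards [Iic_mem_atBot (-1 : ℝ)] with u hu
    have hu1 : u ≤ -1 := hu
    have hE := Ef_pos u
    have hS := Sf_pos u
    have hIle : (∫ t in Iic u, Ef t) ≤ Ef u / 2 := by
      have hint2 : Integrable (fun t : ℝ => -2*t*Ef t) := by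
        simpa [mul_assoc] using integrable_tEf.const_mul (-2)
      have hint3 : Integrable (fun t : ℝ => (-2*t*Ef t)/2) := hint2.div_const 2
      have h1 : (∫ t in Iic u, Ef t) ≤ ∫ t in Iic u, (-2*t*Ef t)/2 := by
        apply setIntegral_mono_on integrable_Ef.integrableOn
          hint3.integrableOn measurableSet_Iic
        intro t ht
        have htle : t ≤ -1 := le_trans ht hu1
        have := Ef_pos t
        rw [le_div_iff₀ (by norm_num : (0:ℝ) < 2)]
        nlinarith
      have h2 : (∫ t in Iic u, (-2*t*Ef t)/2) = Ef u / 2 := by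
        rw [MeasureTheory.integral_div, integral_deriv_Ef]
      linarith
    have hSle : Sf u ≤ Ef u / Real.sqrt π := by
      have := sqrtpi_Sf u
      have hsp := sqrt_pi_pos
      rw [le_div_iff₀ hsp]
      nlinarith
    have hEsq : (Ef u)^2 = Real.exp (-(2*u^2)) := by
      unfold Ef
      rw [sq, ← Real.exp_add]
      ring_nf
    have hterm2 : |2*Real.sqrt π*u*Ef u*Sf u| ≤ 2*u^2*(Ef u)^2 := by
      rw [abs_mul]
      have h1 : |2*Real.sqrt π*u*Ef u| = 2*Real.sqrt π*(-u)*Ef u := by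
        rw [abs_of_nonpos]
        · ring
        · nlinarith [mul_pos sqrt_pi_pos hE]
      rw [h1, abs_of_pos hS]
      have h2 : 2*Real.sqrt π*(-u)*Ef u*Sf u ≤ 2*Real.sqrt π*(-u)*Ef u*(Ef u/Real.sqrt π) := by
        apply mul_le_mul_of_nonneg_left hSle
        nlinarith [mul_pos sqrt_pi_pos hE]
      have h3 : 2*Real.sqrt π*(-u)*Ef u*(Ef u/Real.sqrt π) = 2*(-u)*(Ef u)^2 := by
        field_simp
      have h4 : 0 ≤ u^2 + u := by nlinarith
      nlinarith [mul_nonneg h4 (sq_nonneg (Ef u))]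
    have hterm3 : π*(Sf u)^2 ≤ (Ef u)^2 := by
      have h1 : (Sf u)^2 ≤ (Ef u/Real.sqrt π)^2 := by
        apply sq_le_sq'
        · nlinarith [sqrt_pi_pos]
        · exact hSle
      have h2 : π*(Ef u/Real.sqrt π)^2 = (Ef u)^2 := by
        rw [div_pow, sq_sqrt_pi]
        field_simp
      nlinarith [Real.pi_pos]
    have hpiS : 0 ≤ π*(Sf u)^2 := by positivity
    have habs2 := abs_le.mp hterm2
    rw [Real.norm_eq_abs]
    unfold Hf
    rw [hEsq] at hterm3 habs2 ⊢
    rw [abs_le]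
    constructor
    · nlinarith [Real.exp_pos (-(2*u^2)), sq_nonneg u, mul_nonneg (sq_nonneg u) (Real.exp_pos (-(2*u^2))).le]
    · nlinarith [Real.exp_pos (-(2*u^2)), sq_nonneg u, mul_nonneg (sq_nonneg u) (Real.exp_pos (-(2*u^2))).le]
  have h1 : Tendsto (fun u : ℝ => 3*(Ef u)^2) atBot (𝓝 0) := by
    have := (tendsto_Ef_atBot.mul tendsto_Ef_atBot).const_mul 3
    simpa [sq, mul_zero] using this
  have h2 : Tendsto (fun u : ℝ => 2*((2*u^2) * Real.exp (-(2*u^2)))) atBot (𝓝 0) := by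
    have hcomp : Tendsto (fun u : ℝ => 2*u^2) atBot atTop := by
      apply tendsto_atTop_mono' atBot _ tendsto_neg_atBot_atTop
      filter_upwards [Iic_mem_atBot (-1 : ℝ)] with u hu
      nlinarith [hu.out]
    have := ((tendsto_pow_mul_exp_neg_atTop_nhds_zero 1).comp hcomp).const_mul 2
    simpa [Function.comp, pow_one] using this
  have hsum : Tendsto (fun u : ℝ => 3*(Ef u)^2 + 2*((2*u^2) * Real.exp (-(2*u^2))))
      atBot (𝓝 0) := by
    simpa using h1.add h2
  exact squeeze_zero_norm' hb hsum

lemma Hf_neg (u : ℝ) : Hf u < 0 := by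
  have h1 : Hf u < Hf (u-1) := strictAnti_Hf (by linarith)
  have h2 : Hf (u-1) ≤ 0 := by
    apply ge_of_tendsto tendsto_Hf
    filter_upwards [Iic_mem_atBot (u-1)] with v hv
    exact (strictAnti_Hf.antitone hv)
  linarith

lemma hasDerivAt_Gf (u : ℝ) :
    HasDerivAt Gf (-2*u*Gf u - 2*(Gf u)^2) u := by
  have hE := hasDerivAt_Ef u
  have hS := hasDerivAt_Sf u
  have hSne : Sf u ≠ 0 := ne_of_gt (Sf_pos u)
  have := (hE.div hS hSne).const_mul (1/Real.sqrt π)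
  apply this.congr_deriv
  have hsp : Real.sqrt π ≠ 0 := ne_of_gt sqrt_pi_pos
  unfold Gf
  field_simp

lemma Gf'_neg (u : ℝ) : -2*u*Gf u - 2*(Gf u)^2 < 0 := by
  have h1 := K1 u
  have h2 := Gf_pos u
  nlinarith

lemma one_add_Gf'_pos (u : ℝ) : 0 < 1 + (-2*u*Gf u - 2*(Gf u)^2) := by
  have hH := Hf_neg u
  have hS := Sf_pos u
  have hsp := sqrt_pi_pos
  have hablend : 1 + (-2*u*Gf u - 2*(Gf u)^2) = -Hf u / (π * (Sf u)^2) := by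
    unfold Gf Hf
    set sp := Real.sqrt π with hspdef
    rw [← sq_sqrt_pi, ← hspdef]
    field_simp
    ring
  rw [hablend]
  apply div_pos (by linarith) (by positivity)



lemma exp_series_bound {x : ℝ} (hx : |x| ≤ 1) :
    |Real.exp x - (1 + x + x^2/2 + x^3/6 + x^4/24 + x^5/120)| ≤ |x|^6 * (7/4320) := by
  have h := Real.exp_bound hx (by norm_num : 0 < 6)
  have : (∑ m ∈ Finset.range 6, x ^ m / m.factorial)
      = 1 + x + x^2/2 + x^3/6 + x^4/24 + x^5/120 := by
    simp [Finset.sum_range_succ, Nat.factorial]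
  rw [this] at h
  convert h using 2
  rw [show (Nat.factorial 6 : ℝ) = 720 by norm_num [Nat.factorial]]
  norm_num

lemma exp_num_bounds (x lo hi : ℝ) (hx : |x| ≤ 1)
    (hlo : lo ≤ 1 + x + x^2/2 + x^3/6 + x^4/24 + x^5/120 - |x|^6 * (7/4320))
    (hhi : 1 + x + x^2/2 + x^3/6 + x^4/24 + x^5/120 + |x|^6 * (7/4320) ≤ hi) :
    lo ≤ Real.exp x ∧ Real.exp x ≤ hi := by
  have h := abs_le.mp (exp_series_bound hx)
  constructor <;> linarith [h.1, h.2]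

lemma exp_neg_quarter : (0.77880 : ℝ) ≤ Real.exp (-(1/4) : ℝ) ∧ Real.exp (-(1/4) : ℝ) ≤ 0.778801 := by
  apply exp_num_bounds <;> rw [abs_of_nonpos (by norm_num : -(1/4 : ℝ) ≤ 0)] <;> norm_num

lemma exp_neg_1369 : (0.8720574 : ℝ) ≤ Real.exp (-(0.1369) : ℝ) ∧ Real.exp (-(0.1369) : ℝ) ≤ 0.8720575 := by
  apply exp_num_bounds <;> rw [abs_of_nonpos (by norm_num : -(0.1369 : ℝ) ≤ 0)] <;> norm_num

lemma exp_neg_55125 : (0.5761475 : ℝ) ≤ Real.exp (-(0.55125) : ℝ) ∧ Real.exp (-(0.55125) : ℝ) ≤ 0.5762385 := by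
  apply exp_num_bounds <;> rw [abs_of_nonpos (by norm_num : -(0.55125 : ℝ) ≤ 0)] <;> norm_num

lemma exp_neg_11025 : (0.3319459 : ℝ) ≤ Real.exp (-(1.1025) : ℝ) ∧ Real.exp (-(1.1025) : ℝ) ≤ 0.3320509 := by
  have h := exp_neg_55125
  have hsq : Real.exp (-(1.1025) : ℝ) = Real.exp (-(0.55125) : ℝ) * Real.exp (-(0.55125) : ℝ) := by
    rw [← Real.exp_add]; norm_num
  rw [hsq]
  have h1 := h.1; have h2 := h.2
  have hp : (0:ℝ) < Real.exp (-(0.55125):ℝ) := Real.exp_pos _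
  constructor <;> nlinarith

lemma exp_04 : Real.exp (0.4 : ℝ) ≤ 1.4918254 := by
  have := (exp_num_bounds (0.4 : ℝ) 1.49 1.4918254 (by rw [abs_of_nonneg] <;> norm_num)
    (by rw [abs_of_nonneg] <;> norm_num) (by rw [abs_of_nonneg] <;> norm_num)).2
  exact this

lemma exp_063 : (1.8774139 : ℝ) ≤ Real.exp (0.63 : ℝ) := by
  exact (exp_num_bounds (0.63 : ℝ) 1.8774139 1.88 (by rw [abs_of_nonneg] <;> norm_num)
    (by rw [abs_of_nonneg] <;> norm_num) (by rw [abs_of_nonneg] <;> norm_num)).1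

lemma sqrt_pi_bounds : (1.7724 : ℝ) ≤ Real.sqrt π ∧ Real.sqrt π ≤ 1.77246 := by
  constructor
  · rw [show (1.7724:ℝ) = Real.sqrt (1.7724^2) by rw [Real.sqrt_sq (by norm_num)]]
    apply Real.sqrt_le_sqrt
    nlinarith [Real.pi_gt_d6]
  · rw [show (1.77246:ℝ) = Real.sqrt (1.77246^2) by rw [Real.sqrt_sq (by norm_num)]]
    apply Real.sqrt_le_sqrt
    nlinarith [Real.pi_lt_d2, Real.pi_lt_d6]

lemma Ef_poly_bound {t : ℝ} (ht : |t| ≤ 1) :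
    |Real.exp (-t^2) - (1 - t^2 + t^4/2 - t^6/6 + t^8/24 - t^10/120)| ≤ t^12 * (7/4320) := by
  have habs : |(-t^2 : ℝ)| = t^2 := by
    rw [abs_neg, abs_of_nonneg (sq_nonneg t)]
  have hle : |(-t^2 : ℝ)| ≤ 1 := by
    rw [habs, ← sq_abs]
    nlinarith [abs_nonneg t, mul_le_mul ht ht (abs_nonneg t) (by norm_num : (0:ℝ) ≤ 1)]
  have h := exp_series_bound hle
  rw [habs] at h
  have e1 : 1 + (-t^2) + (-t^2)^2/2 + (-t^2)^3/6 + (-t^2)^4/24 + (-t^2)^5/120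
      = 1 - t^2 + t^4/2 - t^6/6 + t^8/24 - t^10/120 := by ring
  have e2 : (t^2)^6 = t^12 := by ring
  rw [e1, e2] at h
  exact h

noncomputable def Qlo (t : ℝ) : ℝ :=
  t - t^3/3 + t^5/10 - t^7/42 + t^9/216 - t^11/1320 - 7*t^13/56160
noncomputable def Qhi (t : ℝ) : ℝ :=
  t - t^3/3 + t^5/10 - t^7/42 + t^9/216 - t^11/1320 + 7*t^13/56160

lemma hasDerivAt_Qlo (t : ℝ) : HasDerivAt Qlo
    (1 - t^2 + t^4/2 - t^6/6 + t^8/24 - t^10/120 - t^12*(7/4320)) t := by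
  have h := (((((((hasDerivAt_id t).sub ((hasDerivAt_pow 3 t).div_const 3)).add
    ((hasDerivAt_pow 5 t).div_const 10)).sub ((hasDerivAt_pow 7 t).div_const 42)).add
    ((hasDerivAt_pow 9 t).div_const 216)).sub ((hasDerivAt_pow 11 t).div_const 1320)).sub
    (((hasDerivAt_pow 13 t).const_mul 7).div_const 56160))
  exact h.congr_deriv (by norm_num; ring)

lemma hasDerivAt_Qhi (t : ℝ) : HasDerivAt Qhi
    (1 - t^2 + t^4/2 - t^6/6 + t^8/24 - t^10/120 + t^12*(7/4320)) t := by
  have h := (((((((hasDerivAt_id t).sub ((hasDerivAt_pow 3 t).div_const 3)).add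
    ((hasDerivAt_pow 5 t).div_const 10)).sub ((hasDerivAt_pow 7 t).div_const 42)).add
    ((hasDerivAt_pow 9 t).div_const 216)).sub ((hasDerivAt_pow 11 t).div_const 1320)).add
    (((hasDerivAt_pow 13 t).const_mul 7).div_const 56160))
  exact h.congr_deriv (by norm_num; ring)

lemma integral_Ef_poly {c : ℝ} (h0 : 0 ≤ c) (h1 : c ≤ 1) :
    Qlo c ≤ (∫ t in (0:ℝ)..c, Real.exp (-t^2)) ∧
      (∫ t in (0:ℝ)..c, Real.exp (-t^2)) ≤ Qhi c := by
  have hcontE : Continuous (fun t : ℝ => Real.exp (-t^2)) := by fun_prop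
  have hcontlo : Continuous (fun t : ℝ => 1 - t^2 + t^4/2 - t^6/6 + t^8/24 - t^10/120 - t^12*(7/4320)) := by fun_prop
  have hconthi : Continuous (fun t : ℝ => 1 - t^2 + t^4/2 - t^6/6 + t^8/24 - t^10/120 + t^12*(7/4320)) := by fun_prop
  have hvlo : (∫ t in (0:ℝ)..c, (1 - t^2 + t^4/2 - t^6/6 + t^8/24 - t^10/120 - t^12*(7/4320))) = Qlo c := by
    rw [intervalIntegral.integral_eq_sub_of_hasDerivAt (fun t _ => hasDerivAt_Qlo t)
      (hcontlo.intervalIntegrable _ _)]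
    unfold Qlo; norm_num
  have hvhi : (∫ t in (0:ℝ)..c, (1 - t^2 + t^4/2 - t^6/6 + t^8/24 - t^10/120 + t^12*(7/4320))) = Qhi c := by
    rw [intervalIntegral.integral_eq_sub_of_hasDerivAt (fun t _ => hasDerivAt_Qhi t)
      (hconthi.intervalIntegrable _ _)]
    unfold Qhi; norm_num
  have hpt : ∀ t ∈ Set.Icc (0:ℝ) c, |t| ≤ 1 := by
    intro t ht
    rw [abs_of_nonneg ht.1]
    linarith [ht.2]
  constructor
  · rw [← hvlo]
    apply intervalIntegral.integral_mono_on h0 (hcontlo.intervalIntegrable _ _)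
      (hcontE.intervalIntegrable _ _)
    intro t ht
    have := abs_le.mp (Ef_poly_bound (hpt t ht))
    linarith [this.1]
  · rw [← hvhi]
    apply intervalIntegral.integral_mono_on h0 (hcontE.intervalIntegrable _ _)
      (hconthi.intervalIntegrable _ _)
    intro t ht
    have := abs_le.mp (Ef_poly_bound (hpt t ht))
    linarith [this.2]

lemma I05_bounds : (0.4612809 : ℝ) ≤ (∫ t in (0:ℝ)..0.5, Real.exp (-t^2)) ∧
    (∫ t in (0:ℝ)..0.5, Real.exp (-t^2)) ≤ 0.4612811 := by
  have h := integral_Ef_poly (c := 0.5) (by norm_num) (by norm_num)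
  constructor
  · refine le_trans ?_ h.1
    unfold Qlo; norm_num
  · refine le_trans h.2 ?_
    unfold Qhi; norm_num

lemma I037_bounds : (0.3537870 : ℝ) ≤ (∫ t in (0:ℝ)..0.37, Real.exp (-t^2)) ∧
    (∫ t in (0:ℝ)..0.37, Real.exp (-t^2)) ≤ 0.3537872 := by
  have h := integral_Ef_poly (c := 0.37) (by norm_num) (by norm_num)
  constructor
  · refine le_trans ?_ h.1
    unfold Qlo; norm_num
  · refine le_trans h.2 ?_
    unfold Qhi; norm_num

lemma I1_bounds : (0.7466045 : ℝ) ≤ (∫ t in (0:ℝ)..1, Real.exp (-t^2)) ∧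
    (∫ t in (0:ℝ)..1, Real.exp (-t^2)) ≤ 0.7468539 := by
  have h := integral_Ef_poly (c := 1) (by norm_num) (by norm_num)
  constructor
  · refine le_trans ?_ h.1
    unfold Qlo; norm_num
  · refine le_trans h.2 ?_
    unfold Qhi; norm_num

lemma exp_neg_one_bounds : Real.exp (-1 : ℝ) ≤ 0.3678795 := by
  rw [Real.exp_neg]
  rw [inv_le_comm₀ (Real.exp_pos 1) (by norm_num)]
  calc (0.3678795 : ℝ)⁻¹ ≤ 2.7182818283 := by norm_num
    _ ≤ Real.exp 1 := Real.exp_one_gt_d9.le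

lemma Ipiece_bounds : (0.0165972 : ℝ) ≤ (∫ t in (1:ℝ)..1.05, Real.exp (-t^2)) ∧
    (∫ t in (1:ℝ)..1.05, Real.exp (-t^2)) ≤ 0.0183940 := by
  have hcontE : Continuous (fun t : ℝ => Real.exp (-t^2)) := by fun_prop
  have hlo : ∀ t ∈ Set.Icc (1:ℝ) 1.05, (0.3319459:ℝ) ≤ Real.exp (-t^2) := by
    intro t ht
    refine le_trans exp_neg_11025.1 (Real.exp_le_exp.mpr ?_)
    nlinarith [ht.1, ht.2]
  have hhi : ∀ t ∈ Set.Icc (1:ℝ) 1.05, Real.exp (-t^2) ≤ 0.3678795 := by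
    intro t ht
    refine le_trans (Real.exp_le_exp.mpr ?_) exp_neg_one_bounds
    nlinarith [ht.1, ht.2]
  constructor
  · have h := intervalIntegral.integral_mono_on (μ := volume) (by norm_num : (1:ℝ) ≤ 1.05)
      (intervalIntegrable_const) (hcontE.intervalIntegrable _ _)
      (f := fun _ => (0.3319459:ℝ)) hlo
    rw [intervalIntegral.integral_const] at h
    norm_num at h ⊢
    linarith
  · have h := intervalIntegral.integral_mono_on (μ := volume) (by norm_num : (1:ℝ) ≤ 1.05)
      (hcontE.intervalIntegrable _ _) (intervalIntegrable_const)
      (g := fun _ => (0.3678795:ℝ)) hhi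
    rw [intervalIntegral.integral_const] at h
    norm_num at h ⊢
    linarith

lemma I105_bounds : (0.7632017 : ℝ) ≤ (∫ t in (0:ℝ)..1.05, Real.exp (-t^2)) ∧
    (∫ t in (0:ℝ)..1.05, Real.exp (-t^2)) ≤ 0.7652479 := by
  have hcontE : Continuous (fun t : ℝ => Real.exp (-t^2)) := by fun_prop
  have hsplit : (∫ t in (0:ℝ)..1, Real.exp (-t^2)) + (∫ t in (1:ℝ)..1.05, Real.exp (-t^2))
      = ∫ t in (0:ℝ)..1.05, Real.exp (-t^2) :=
    intervalIntegral.integral_add_adjacent_intervals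
      (hcontE.intervalIntegrable _ _) (hcontE.intervalIntegrable _ _)
  have h1 := I1_bounds
  have h2 := Ipiece_bounds
  constructor
  · rw [← hsplit]; linarith [h1.1, h2.1]
  · rw [← hsplit]; linarith [h1.2, h2.2]

lemma erf_bracket {c lo hi : ℝ} (h1 : lo ≤ ∫ t in (0:ℝ)..c, Real.exp (-t^2))
    (h2 : (∫ t in (0:ℝ)..c, Real.exp (-t^2)) ≤ hi) (hlo : 0 ≤ lo) :
    2*lo/1.77246 ≤ erf c ∧ erf c ≤ 2*hi/1.7724 := by
  have hsp := sqrt_pi_bounds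
  have hsppos := sqrt_pi_pos
  have herf : erf c = 2 * (∫ t in (0:ℝ)..c, Real.exp (-t^2)) / Real.sqrt π := by
    rw [erf]; ring
  set I := ∫ t in (0:ℝ)..c, Real.exp (-t^2)
  constructor
  · rw [herf, div_le_div_iff₀ (by norm_num) hsppos]
    nlinarith [mul_le_mul_of_nonneg_left hsp.2 hlo]
  · rw [herf, div_le_div_iff₀ hsppos (by norm_num)]
    have hhi0 : 0 ≤ hi := by linarith
    nlinarith [mul_le_mul_of_nonneg_left hsp.1 hhi0]

lemma Sf_05_bounds : (1.52049 : ℝ) ≤ Sf 0.5 ∧ Sf 0.5 ≤ 1.52052 := by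
  have h := erf_bracket I05_bounds.1 I05_bounds.2 (by norm_num)
  rw [Sf]
  constructor
  · have := h.1; norm_num at this ⊢; linarith
  · have := h.2; norm_num at this ⊢; linarith

lemma Sf_037_bounds : (1.39920 : ℝ) ≤ Sf 0.37 ∧ Sf 0.37 ≤ 1.39922 := by
  have h := erf_bracket I037_bounds.1 I037_bounds.2 (by norm_num)
  rw [Sf]
  constructor
  · have := h.1; norm_num at this ⊢; linarith
  · have := h.2; norm_num at this ⊢; linarith

lemma Sf_105_bounds : (1.86117 : ℝ) ≤ Sf 1.05 ∧ Sf 1.05 ≤ 1.86352 := by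
  have h := erf_bracket I105_bounds.1 I105_bounds.2 (by norm_num)
  rw [Sf]
  constructor
  · have := h.1; norm_num at this ⊢; linarith
  · have := h.2; norm_num at this ⊢; linarith

lemma Gf_le_of {u q : ℝ} (h : Ef u ≤ q * (Real.sqrt π * Sf u)) : Gf u ≤ q := by
  have hS := Sf_pos u
  have hsp := sqrt_pi_pos
  have e : Gf u = Ef u / (Real.sqrt π * Sf u) := by
    rw [Gf]; field_simp
  rw [e, div_le_iff₀ (by positivity)]
  linarith

lemma le_Gf_of {u q : ℝ} (h : q * (Real.sqrt π * Sf u) ≤ Ef u) : q ≤ Gf u := by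
  have hS := Sf_pos u
  have hsp := sqrt_pi_pos
  have e : Gf u = Ef u / (Real.sqrt π * Sf u) := by
    rw [Gf]; field_simp
  rw [e, le_div_iff₀ (by positivity)]
  linarith

lemma Ef_037 : Ef 0.37 = Real.exp (-(0.1369:ℝ)) := by
  rw [Ef]; norm_num

lemma Ef_05 : Ef 0.5 = Real.exp (-(1/4 : ℝ)) := by
  rw [Ef]; norm_num

lemma Ef_105 : Ef 1.05 = Real.exp (-(1.1025:ℝ)) := by
  rw [Ef]; norm_num

lemma Gf_037_le : Gf 0.37 ≤ 0.37 := by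
  apply Gf_le_of
  rw [Ef_037]
  have h1 := exp_neg_1369.2
  have hprod : (1.7724:ℝ)*1.39920 ≤ Real.sqrt π * Sf 0.37 :=
    mul_le_mul sqrt_pi_bounds.1 Sf_037_bounds.1 (by norm_num) sqrt_pi_pos.le
  nlinarith

lemma Gf_05_bounds : (0.28893 : ℝ) ≤ Gf 0.5 ∧ Gf 0.5 ≤ 0.28901 := by
  have hprodlo : (1.7724:ℝ)*1.52049 ≤ Real.sqrt π * Sf 0.5 :=
    mul_le_mul sqrt_pi_bounds.1 Sf_05_bounds.1 (by norm_num) sqrt_pi_pos.le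
  have hprodhi : Real.sqrt π * Sf 0.5 ≤ (1.77246:ℝ)*1.52052 :=
    mul_le_mul sqrt_pi_bounds.2 Sf_05_bounds.2 (le_of_lt (Sf_pos _)) (by norm_num)
  constructor
  · apply le_Gf_of
    rw [Ef_05]
    have h1 := exp_neg_quarter.1
    nlinarith
  · apply Gf_le_of
    rw [Ef_05]
    have h1 := exp_neg_quarter.2
    nlinarith

lemma Gf_105_bounds : (0.10049 : ℝ) ≤ Gf 1.05 ∧ Gf 1.05 ≤ 0.10067 := by
  have hprodlo : (1.7724:ℝ)*1.86117 ≤ Real.sqrt π * Sf 1.05 :=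
    mul_le_mul sqrt_pi_bounds.1 Sf_105_bounds.1 (by norm_num) sqrt_pi_pos.le
  have hprodhi : Real.sqrt π * Sf 1.05 ≤ (1.77246:ℝ)*1.86352 :=
    mul_le_mul sqrt_pi_bounds.2 Sf_105_bounds.2 (le_of_lt (Sf_pos _)) (by norm_num)
  constructor
  · apply le_Gf_of
    rw [Ef_105]
    have h1 := exp_neg_11025.1
    nlinarith
  · apply Gf_le_of
    rw [Ef_105]
    have h1 := exp_neg_11025.2
    nlinarith

lemma log_Sf_05 : (0.4 : ℝ) ≤ Real.log (Sf 0.5) := by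
  rw [Real.le_log_iff_exp_le (Sf_pos _)]
  calc Real.exp 0.4 ≤ 1.4918254 := exp_04
    _ ≤ Sf 0.5 := by linarith [Sf_05_bounds.1]

lemma log_Sf_105 : Real.log (Sf 1.05) ≤ 0.63 := by
  rw [Real.log_le_iff_le_exp (Sf_pos _)]
  calc Sf 1.05 ≤ 1.86352 := Sf_105_bounds.2
    _ ≤ 1.8774139 := by norm_num
    _ ≤ Real.exp 0.63 := exp_063

noncomputable def Xf (u : ℝ) : ℝ := (u + Gf u)/2
noncomputable def Psif (u : ℝ) : ℝ := -2*(Xf u)^2 + (Gf u)^2 + Real.log (Sf u)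

lemma w₂_eq (x θ : ℝ) : w₂ x θ = θ + Gf (2*x+θ) := rfl

lemma w₁_eq (x θ : ℝ) : w₁ x θ = -2*x^2 + θ^2 + Real.log (Sf (2*x+θ)) := rfl

lemma hasDerivAt_w₂ (x θ : ℝ) : HasDerivAt (fun θ => w₂ x θ)
    (1 + (-2*(2*x+θ)*Gf (2*x+θ) - 2*(Gf (2*x+θ))^2)) θ := by
  have hinner : HasDerivAt (fun θ : ℝ => 2*x+θ) 1 θ := by
    simpa using (hasDerivAt_id θ).const_add (2*x)
  have hG : HasDerivAt (fun θ : ℝ => Gf (2*x+θ))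
      (-2*(2*x+θ)*Gf (2*x+θ) - 2*(Gf (2*x+θ))^2) θ := by
    have := (hasDerivAt_Gf (2*x+θ)).comp θ hinner
    simpa [Function.comp_def] using this
  have := (hasDerivAt_id θ).add hG
  simp only [w₂_eq]
  exact this.congr_deriv (by simp)

lemma strictMono_w₂ (x : ℝ) : StrictMono (fun θ => w₂ x θ) := by
  apply strictMono_of_deriv_pos
  intro θ
  rw [(hasDerivAt_w₂ x θ).deriv]
  exact one_add_Gf'_pos (2*x+θ)

lemma Gf_neg_one_lt : Gf (-1) ≤ 1.37 := by
  have h := one_add_Gf'_pos (-1)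
  nlinarith [Gf_pos (-1)]

lemma part1 : ∀ x ∈ Set.Icc (0.37613 : ℝ) 0.58870, ∃! θ : ℝ, w₂ x θ = 0 := by
  intro x hx
  obtain ⟨hx1, hx2⟩ := hx
  have hcont : ContinuousOn (fun θ => w₂ x θ) (Set.Icc (-1-2*x) 0) := by
    intro θ _
    exact ((hasDerivAt_w₂ x θ).continuousAt).continuousWithinAt
  have hlo : w₂ x (-1-2*x) < 0 := by
    rw [w₂_eq]
    have : 2*x + (-1-2*x) = -1 := by ring
    rw [this]
    linarith [Gf_neg_one_lt]
  have hhi : 0 < w₂ x 0 := by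
    rw [w₂_eq]
    simpa using Gf_pos (2*x)
  have hab : (-1-2*x : ℝ) ≤ 0 := by linarith
  have hIVT := intermediate_value_Icc hab hcont
  have hmem : (0:ℝ) ∈ Set.Icc (w₂ x (-1-2*x)) (w₂ x 0) := ⟨hlo.le, hhi.le⟩
  obtain ⟨θ, _, hθ⟩ := hIVT hmem
  refine ⟨θ, hθ, ?_⟩
  intro θ' hθ'
  exact (strictMono_w₂ x).injective (hθ'.trans hθ.symm)

lemma hasDerivAt_Xf (u : ℝ) :
    HasDerivAt Xf ((1 + (-2*u*Gf u - 2*(Gf u)^2))/2) u := by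
  have := ((hasDerivAt_id u).add (hasDerivAt_Gf u)).div_const 2
  apply this.congr_deriv
  ring

lemma strictMono_Xf : StrictMono Xf := by
  apply strictMono_of_deriv_pos
  intro u
  rw [(hasDerivAt_Xf u).deriv]
  linarith [one_add_Gf'_pos u]

lemma strictMono_Df : StrictMono (fun u => u - Gf u) := by
  apply strictMono_of_deriv_pos
  intro u
  have h : HasDerivAt (fun u => u - Gf u) (1 - (-2*u*Gf u - 2*(Gf u)^2)) u :=
    (hasDerivAt_id u).sub (hasDerivAt_Gf u) |>.congr_deriv (by simp [id_eq])
  rw [h.deriv]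
  linarith [Gf'_neg u]

lemma hasDerivAt_Psif (u : ℝ) :
    HasDerivAt Psif ((1 + (-2*u*Gf u - 2*(Gf u)^2)) * (Gf u - u)) u := by
  have hX := hasDerivAt_Xf u
  have hG := hasDerivAt_Gf u
  have hS := hasDerivAt_Sf u
  have hlog : HasDerivAt (fun u => Real.log (Sf u))
      ((2 / Real.sqrt π * Ef u) / Sf u) u := hS.log (ne_of_gt (Sf_pos u))
  have h2G : (2 / Real.sqrt π * Ef u) / Sf u = 2 * Gf u := by
    rw [Gf]; ring
  rw [h2G] at hlog
  have h1 : HasDerivAt (fun u => -2*(Xf u)^2)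
      (-2*(2*Xf u*((1 + (-2*u*Gf u - 2*(Gf u)^2))/2))) u :=
    ((hX.pow 2).const_mul (-2)).congr_deriv (by ring)
  have h2 : HasDerivAt (fun u => (Gf u)^2)
      (2*Gf u*(-2*u*Gf u - 2*(Gf u)^2)) u := by
    exact (hG.pow 2).congr_deriv (by simp)
  have := (h1.add h2).add hlog
  apply this.congr_deriv
  have hXval : Xf u = (u + Gf u)/2 := rfl
  rw [hXval]
  ring

lemma Psif_strictAntiOn : StrictAntiOn Psif (Set.Ici (0.37:ℝ)) := by
  apply strictAntiOn_of_deriv_neg (convex_Ici _)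
  · intro u _
    exact (hasDerivAt_Psif u).continuousAt.continuousWithinAt
  · intro u hu
    rw [interior_Ici] at hu
    rw [(hasDerivAt_Psif u).deriv]
    have h1 := one_add_Gf'_pos u
    have h2 : Gf u - u < 0 := by
      have := strictMono_Df (show (0.37:ℝ) < u from hu)
      have h3 := Gf_037_le
      simp only at this
      linarith
    nlinarith

lemma Psif_05_pos : 0 < Psif 0.5 := by
  have hG := Gf_05_bounds
  have hlog := log_Sf_05
  rw [Psif, Xf]
  nlinarith [hG.1, hG.2, hlog]

lemma Psif_105_neg : Psif 1.05 < 0 := by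
  have hG := Gf_105_bounds
  have hlog := log_Sf_105
  rw [Psif, Xf]
  nlinarith [hG.1, hG.2, hlog]

lemma Xf_05_ge : (0.37613:ℝ) ≤ Xf 0.5 := by
  rw [Xf]; linarith [Gf_05_bounds.1]

lemma Xf_105_le : Xf 1.05 ≤ (0.58870:ℝ) := by
  rw [Xf]; linarith [Gf_105_bounds.2]

lemma Xf_037_le : Xf 0.37 ≤ 0.37 := by
  rw [Xf]; linarith [Gf_037_le]

lemma w₂_param (u : ℝ) : w₂ (Xf u) (-Gf u) = 0 := by
  rw [w₂_eq]
  have : 2 * Xf u + -Gf u = u := by rw [Xf]; ring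
  rw [this]
  ring

lemma w₁_param (u : ℝ) : w₁ (Xf u) (-Gf u) = Psif u := by
  rw [w₁_eq, Psif]
  have : 2 * Xf u + -Gf u = u := by rw [Xf]; ring
  rw [this]
  ring

lemma part2 : ∃! p : ℝ × ℝ, p.1 ∈ Set.Icc (0.37613 : ℝ) 0.58870 ∧
    w₁ p.1 p.2 = 0 ∧ w₂ p.1 p.2 = 0 := by
  -- existence of root of Psif on [0.5, 1.05]
  have hcont : ContinuousOn Psif (Set.Icc (0.5:ℝ) 1.05) := by
    intro u _
    exact (hasDerivAt_Psif u).continuousAt.continuousWithinAt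
  have hIVT := intermediate_value_Icc' (by norm_num : (0.5:ℝ) ≤ 1.05) hcont
  have hmem : (0:ℝ) ∈ Set.Icc (Psif 1.05) (Psif 0.5) := ⟨Psif_105_neg.le, Psif_05_pos.le⟩
  obtain ⟨u₀, hu₀mem, hu₀⟩ := hIVT hmem
  have hu₀1 : (0.5:ℝ) ≤ u₀ := hu₀mem.1
  have hu₀2 : u₀ ≤ 1.05 := hu₀mem.2
  refine ⟨(Xf u₀, -Gf u₀), ⟨⟨?_, ?_⟩, ?_, ?_⟩, ?_⟩
  · calc (0.37613:ℝ) ≤ Xf 0.5 := Xf_05_ge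
      _ ≤ Xf u₀ := strictMono_Xf.monotone hu₀1
  · calc Xf u₀ ≤ Xf 1.05 := strictMono_Xf.monotone hu₀2
      _ ≤ 0.58870 := Xf_105_le
  · rw [w₁_param, hu₀]
  · exact w₂_param u₀
  · rintro ⟨x, θ⟩ ⟨hxmem, hw1, hw2⟩
    set u' := 2*x + θ with hu'
    have hθ : θ = -Gf u' := by
      rw [w₂_eq] at hw2
      linarith [hw2]
    have hxval : x = Xf u' := by
      rw [Xf]
      rw [hθ] at hu'
      linarith [hu']
    have hPsi : Psif u' = 0 := by
      rw [← w₁_param u']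
      rw [← hxval, ← hθ]
      exact hw1
    have hu'mem : u' ∈ Set.Ici (0.37:ℝ) := by
      have hXgt : Xf 0.37 < Xf u' := by
        calc Xf 0.37 ≤ 0.37 := Xf_037_le
          _ < 0.37613 := by norm_num
          _ ≤ Xf u' := by rw [← hxval]; exact hxmem.1
      have := strictMono_Xf.lt_iff_lt.mp hXgt
      exact Set.mem_Ici.mpr this.le
    have hu₀mem' : u₀ ∈ Set.Ici (0.37:ℝ) := by
      simp only [Set.mem_Ici]; linarith
    have : u' = u₀ := by
      apply Psif_strictAntiOn.injOn hu'mem hu₀mem'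
      rw [hPsi, hu₀]
    rw [Prod.mk.injEq]
    constructor
    · rw [hxval, this]
    · rw [hθ, this]


theorem stmt2 :
    (∀ x ∈ Set.Icc (0.37613 : ℝ) 0.58870, ∃! θ : ℝ, w₂ x θ = 0) ∧
    (∃! p : ℝ × ℝ, p.1 ∈ Set.Icc (0.37613 : ℝ) 0.58870 ∧ w₁ p.1 p.2 = 0 ∧ w₂ p.1 p.2 = 0) := by
  exact ⟨part1, part2⟩
end

section
/- For every real x > 0, the equation θ + (1/√π)·exp(−(2x+θ)²)/(1 + erf(2x+θ)) = 0 has exactly one solution θ ∈ ℝ. -/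
open MeasureTheory Filter Real Set

noncomputable def psiG : ℝ → ℝ := fun t => Real.exp (-t ^ 2)

noncomputable def GG : ℝ → ℝ := fun u => ∫ t in Set.Iic u, Real.exp (-t ^ 2)

lemma psiG_pos (t : ℝ) : 0 < psiG t := Real.exp_pos _

lemma psiG_cont : Continuous psiG := by
  unfold psiG; fun_prop

lemma psiG_integrable : Integrable psiG := by
  have := integrable_exp_neg_mul_sq (b := 1) one_pos
  unfold psiG; simpa using this

lemma sq_psiG_integrable : Integrable (fun t : ℝ => t ^ 2 * psiG t) := by
  have := integrable_rpow_mul_exp_neg_mul_sq (b := 1) one_pos (s := 2) (by norm_num)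
  have h2 : ∀ t : ℝ, t ^ (2 : ℝ) = t ^ 2 := fun t => by
    rw [show (2 : ℝ) = ((2 : ℕ) : ℝ) by norm_num, Real.rpow_natCast]
  simpa [psiG, h2] using this

lemma GG_zero : GG 0 = Real.sqrt Real.pi / 2 := by
  have h := integral_comp_neg_Ioi (0 : ℝ) (fun t => Real.exp (-t ^ 2))
  have h2 : (∫ t in Set.Ioi (0 : ℝ), Real.exp (-(-t) ^ 2)) =
      ∫ t in Set.Ioi (0 : ℝ), Real.exp (-t ^ 2) := by
    apply setIntegral_congr_fun measurableSet_Ioi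
    intro t _; ring_nf
  have h3 := integral_gaussian_Ioi 1
  simp only [neg_zero] at h
  unfold GG
  rw [← h, h2]
  simpa using h3

lemma GG_hasDeriv (u : ℝ) : HasDerivAt GG (psiG u) u := by
  have heq : ∀ v : ℝ, GG v = GG 0 + ∫ t in (0:ℝ)..v, Real.exp (-t ^ 2) := by
    intro v
    have := intervalIntegral.integral_Iic_sub_Iic (μ := volume)
      (f := fun t : ℝ => Real.exp (-t ^ 2)) (a := 0) (b := v)
      psiG_integrable.integrableOn psiG_integrable.integrableOn
    unfold GG; linarith [this]
  have hd : HasDerivAt (fun v => ∫ t in (0:ℝ)..v, Real.exp (-t ^ 2)) (psiG u) u := by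
    apply intervalIntegral.integral_hasDerivAt_right
      psiG_integrable.intervalIntegrable
      (psiG_cont.stronglyMeasurableAtFilter _ _)
      psiG_cont.continuousAt
  have := hd.const_add (GG 0)
  exact this.congr_of_eventuallyEq (Filter.Eventually.of_forall fun v => (heq v))

lemma psiG_hasDeriv (u : ℝ) :
    HasDerivAt psiG (-2 * u * psiG u) u := by
  have h1 : HasDerivAt (fun v : ℝ => -v ^ 2) (-(2 * u)) u := by
    simpa using (hasDerivAt_pow 2 u).fun_neg
  have := h1.exp
  exact this.congr_deriv (by unfold psiG; ring)

/-- Helper: a function with positive derivative everywhere tending to `0` at `-∞`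
is positive everywhere. -/
lemma pos_of_deriv_pos_tendsto {f f' : ℝ → ℝ} (hd : ∀ u, HasDerivAt f (f' u) u)
    (hp : ∀ u, 0 < f' u) (hl : Tendsto f atBot (nhds 0)) (u : ℝ) : 0 < f u := by
  have hm : StrictMono f := strictMono_of_deriv_pos fun v => by
    rw [(hd v).deriv]; exact hp v
  have h1 : 0 ≤ f (u - 1) :=
    le_of_tendsto hl (Filter.eventually_atBot.2 ⟨u - 1, fun v hv => hm.monotone hv⟩)
  linarith [hm (show u - 1 < u by linarith)]

lemma tendsto_integral_Iic_atBot {f : ℝ → ℝ} (hf : Integrable f) :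
    Tendsto (fun u => ∫ t in Set.Iic u, f t) atBot (nhds 0) := by
  have h := MeasureTheory.intervalIntegral_tendsto_integral_Iic (μ := volume)
    (a := fun u : ℝ => u) (f := f) (l := atBot) 0 hf.integrableOn tendsto_id
  have h2 : Tendsto (fun u : ℝ => (∫ t in Set.Iic (0:ℝ), f t) - ∫ t in u..(0:ℝ), f t)
      atBot (nhds ((∫ t in Set.Iic (0:ℝ), f t) - ∫ t in Set.Iic (0:ℝ), f t)) :=
    tendsto_const_nhds.sub h
  rw [sub_self] at h2
  apply h2.congr
  intro u
  have := intervalIntegral.integral_Iic_sub_Iic (μ := volume) (f := f) (a := u) (b := 0)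
    hf.integrableOn hf.integrableOn
  linarith

lemma tendsto_GG : Tendsto GG atBot (nhds 0) := tendsto_integral_Iic_atBot psiG_integrable

lemma GG_pos (u : ℝ) : 0 < GG u :=
  pos_of_deriv_pos_tendsto GG_hasDeriv psiG_pos tendsto_GG u

lemma tendsto_sq_atBot : Tendsto (fun u : ℝ => u ^ 2) atBot atTop := by
  rw [tendsto_atTop]
  intro b
  filter_upwards [eventually_le_atBot (-(|b| + 1))] with u hu
  have h1 : (0:ℝ) ≤ -(u + (|b| + 1)) := by linarith
  have h2 : (0:ℝ) ≤ |b| + 1 := by positivity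
  have h3 : (0:ℝ) ≤ -u := by linarith
  nlinarith [le_abs_self b, mul_nonneg h1 h2, mul_nonneg h3 h1]

lemma tendsto_psiG : Tendsto psiG atBot (nhds 0) := by
  have := Real.tendsto_exp_neg_atTop_nhds_zero.comp tendsto_sq_atBot
  exact this

lemma tendsto_sq_mul_psiG : Tendsto (fun u : ℝ => u ^ 2 * psiG u) atBot (nhds 0) := by
  have := (Real.tendsto_pow_mul_exp_neg_atTop_nhds_zero 1).comp tendsto_sq_atBot
  apply this.congr
  intro u; simp [psiG]

lemma tendsto_mul_psiG : Tendsto (fun u : ℝ => u * psiG u) atBot (nhds 0) := by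
  apply squeeze_zero_norm' _ tendsto_sq_mul_psiG
  filter_upwards [Filter.eventually_le_atBot (-1 : ℝ)] with u hu
  have h1 : 0 < psiG u := psiG_pos u
  have h2 : |u| ≤ u ^ 2 := by nlinarith [abs_nonneg u, sq_abs u, neg_abs_le u]
  calc ‖u * psiG u‖ = |u| * psiG u := by
        rw [norm_mul, Real.norm_eq_abs, Real.norm_eq_abs, abs_of_pos h1]
      _ ≤ u ^ 2 * psiG u := by nlinarith

lemma tendsto_sq_mul_GG : Tendsto (fun u : ℝ => u ^ 2 * GG u) atBot (nhds 0) := by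
  have hJ : Tendsto (fun u => ∫ t in Set.Iic u, t ^ 2 * psiG t) atBot (nhds 0) :=
    tendsto_integral_Iic_atBot sq_psiG_integrable
  apply squeeze_zero' _ _ hJ
  · filter_upwards with u
    exact mul_nonneg (sq_nonneg u) (GG_pos u).le
  · filter_upwards [Filter.eventually_le_atBot (0 : ℝ)] with u hu
    have h1 : u ^ 2 * GG u = ∫ t in Set.Iic u, u ^ 2 * psiG t := by
      unfold GG psiG
      rw [MeasureTheory.integral_const_mul]
    rw [h1]
    apply setIntegral_mono_on
    · exact (psiG_integrable.integrableOn).const_mul _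
    · exact sq_psiG_integrable.integrableOn
    · exact measurableSet_Iic
    · intro t ht
      have ht' : t ≤ u := ht
      have : u ^ 2 ≤ t ^ 2 := by nlinarith
      nlinarith [psiG_pos t]

lemma tendsto_mul_GG : Tendsto (fun u : ℝ => u * GG u) atBot (nhds 0) := by
  apply squeeze_zero_norm' _ tendsto_sq_mul_GG
  filter_upwards [Filter.eventually_le_atBot (-1 : ℝ)] with u hu
  have h1 : 0 < GG u := GG_pos u
  have h2 : |u| ≤ u ^ 2 := by nlinarith [abs_nonneg u, sq_abs u, neg_abs_le u]
  calc ‖u * GG u‖ = |u| * GG u := by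
        rw [norm_mul, Real.norm_eq_abs, Real.norm_eq_abs, abs_of_pos h1]
      _ ≤ u ^ 2 * GG u := by nlinarith

/-- `N u = ψ u + 2 u G u`, derivative `2 G u`. -/
noncomputable def NN : ℝ → ℝ := fun u => psiG u + 2 * u * GG u

lemma NN_hasDeriv (u : ℝ) : HasDerivAt NN (2 * GG u) u := by
  have h1 : HasDerivAt (fun u : ℝ => 2 * u) 2 u := by
    simpa using (hasDerivAt_id u).const_mul 2
  have h3 : HasDerivAt NN (-2 * u * psiG u + (2 * GG u + 2 * u * psiG u)) u := by
    unfold NN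
    convert (psiG_hasDeriv u).fun_add (h1.fun_mul (GG_hasDeriv u)) using 1 <;> try ring
  convert h3 using 1 <;> try ring

lemma tendsto_NN : Tendsto NN atBot (nhds 0) := by
  have := tendsto_psiG.add (tendsto_mul_GG.const_mul 2)
  simp only [mul_zero, add_zero] at this
  apply this.congr; intro u; unfold NN; ring

lemma NN_pos (u : ℝ) : 0 < NN u :=
  pos_of_deriv_pos_tendsto NN_hasDeriv (fun u => by have := GG_pos u; linarith) tendsto_NN u

/-- `M u = (1 + 2u²) G u + u ψ u`, derivative `2 N u`. -/
noncomputable def MM : ℝ → ℝ := fun u => (1 + 2 * u ^ 2) * GG u + u * psiG u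

lemma MM_hasDeriv (u : ℝ) : HasDerivAt MM (2 * NN u) u := by
  have h1 : HasDerivAt (fun u : ℝ => 1 + 2 * u ^ 2) (4 * u) u := by
    have := ((hasDerivAt_pow 2 u).const_mul 2).const_add 1
    exact this.congr_deriv (by ring)
  have h2 := (h1.fun_mul (GG_hasDeriv u)).fun_add ((hasDerivAt_id' u).fun_mul (psiG_hasDeriv u))
  have h3 : HasDerivAt MM
      (4 * u * GG u + (1 + 2 * u ^ 2) * psiG u +
        (1 * psiG u + u * (-2 * u * psiG u))) u := by
    unfold MM; convert h2 using 1 <;> try ring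
  convert h3 using 1
  unfold NN; ring

lemma tendsto_MM : Tendsto MM atBot (nhds 0) := by
  have h : Tendsto (fun u : ℝ => GG u + 2 * (u ^ 2 * GG u) + u * psiG u) atBot
      (nhds (0 + 2 * 0 + 0)) :=
    (tendsto_GG.add (tendsto_sq_mul_GG.const_mul 2)).add tendsto_mul_psiG
  simp only [mul_zero, add_zero] at h
  apply h.congr; intro u; unfold MM; ring

lemma MM_pos (u : ℝ) : 0 < MM u :=
  pos_of_deriv_pos_tendsto MM_hasDeriv (fun u => by have := NN_pos u; linarith) tendsto_MM u

/-- `K u = 2 G² - 2 u ψ G - ψ²`, derivative `2 ψ M`. -/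
noncomputable def KK : ℝ → ℝ :=
  fun u => 2 * GG u ^ 2 - 2 * u * psiG u * GG u - psiG u ^ 2

lemma KK_hasDeriv (u : ℝ) : HasDerivAt KK (2 * psiG u * MM u) u := by
  have hG := GG_hasDeriv u
  have hψ := psiG_hasDeriv u
  have h2u : HasDerivAt (fun u : ℝ => 2 * u) 2 u := by
    simpa using (hasDerivAt_id u).const_mul 2
  have hA : HasDerivAt (fun u => 2 * GG u ^ 2) (2 * (2 * GG u * psiG u)) u := by
    have := ((hG.fun_pow 2)).const_mul 2
    exact this.congr_deriv (by ring)
  have hB : HasDerivAt (fun u => 2 * u * psiG u * GG u)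
      ((2 * psiG u + 2 * u * (-2 * u * psiG u)) * GG u + 2 * u * psiG u * psiG u) u :=
    ((h2u.fun_mul hψ).fun_mul hG)
  have hC : HasDerivAt (fun u => psiG u ^ 2) (2 * psiG u * (-2 * u * psiG u)) u := by
    have := hψ.fun_pow 2
    exact this.congr_deriv (by ring)
  have := (hA.fun_sub hB).fun_sub hC
  exact this.congr_deriv (by unfold MM; ring)

lemma tendsto_KK : Tendsto KK atBot (nhds 0) := by
  have h : Tendsto (fun u : ℝ => 2 * (GG u * GG u) - 2 * (u * psiG u) * GG u
      - psiG u * psiG u) atBot (nhds (2 * (0 * 0) - 2 * 0 * 0 - 0 * 0)) := by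
    exact (((tendsto_GG.mul tendsto_GG).const_mul 2).sub
      ((tendsto_mul_psiG.const_mul 2).mul tendsto_GG)).sub (tendsto_psiG.mul tendsto_psiG)
  simp only [mul_zero, zero_mul, sub_zero] at h
  apply h.congr; intro u; unfold KK; ring

lemma KK_pos (u : ℝ) : 0 < KK u :=
  pos_of_deriv_pos_tendsto KK_hasDeriv
    (fun u => mul_pos (mul_pos two_pos (psiG_pos u)) (MM_pos u)) tendsto_KK u

lemma key_ineq (G P u x : ℝ) (hG : 0 < G) (hx : 0 < x)
    (hM : 0 < (1 + 2 * u ^ 2) * G + u * P) (hux : u * x = -(1/2)) :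
    P * x < (4 * x ^ 2 + 1) * G := by
  have hsq : u ^ 2 * x ^ 2 = 1/4 := by nlinarith [hux]
  have e1 : u ^ 2 * x ^ 2 * G = G / 4 := by linear_combination G * hsq
  have e2 : u * x ^ 2 * P = -(x * P) / 2 := by linear_combination (x * P) * hux
  nlinarith [mul_pos hM (mul_pos hx hx), e1, e2, mul_pos hG (mul_pos hx hx)]

lemma key_ineq2 (P T x c : ℝ) (hx : 0 < x) (hkey : P * x < c) (he : T * x = c) :
    P < T := by nlinarith

theorem stmt3 (x : ℝ) (hx : 0 < x) :
    ∃! θ : ℝ,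
      θ + (1 / Real.sqrt Real.pi) * (Real.exp (-(2 * x + θ) ^ 2) / (1 + erf (2 * x + θ))) = 0 := by
  have hsqrtπ : 0 < Real.sqrt Real.pi := Real.sqrt_pos.2 Real.pi_pos
  -- rewrite 1 + erf u = (2/√π) G u
  have herf : ∀ u : ℝ, 1 + erf u = (2 / Real.sqrt Real.pi) * GG u := by
    intro u
    have h1 : (∫ t in (0:ℝ)..u, Real.exp (-t ^ 2)) = GG u - GG 0 := by
      have := intervalIntegral.integral_Iic_sub_Iic (μ := volume)
        (f := fun t : ℝ => Real.exp (-t ^ 2)) (a := 0) (b := u)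
        psiG_integrable.integrableOn psiG_integrable.integrableOn
      unfold GG; linarith
    unfold erf
    rw [h1, GG_zero]
    field_simp
    ring
  -- the function F
  set F : ℝ → ℝ := fun θ =>
    θ + psiG (2 * x + θ) / (2 * GG (2 * x + θ)) with hF_def
  have hFeq : ∀ θ : ℝ,
      θ + (1 / Real.sqrt Real.pi) * (Real.exp (-(2 * x + θ) ^ 2) / (1 + erf (2 * x + θ)))
        = F θ := by
    intro θ
    rw [herf]
    have hG := GG_pos (2 * x + θ)
    simp only [hF_def, psiG]
    field_simp
    try ring
  -- F has positive derivative
  have hFderiv : ∀ θ : ℝ, ∃ d : ℝ, HasDerivAt F d θ ∧ 0 < d := by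
    intro θ
    set u := 2 * x + θ with hu
    have hinner : HasDerivAt (fun θ : ℝ => 2 * x + θ) 1 θ := by
      simpa using (hasDerivAt_id θ).const_add (2 * x)
    have hGu : (2 * GG u) ≠ 0 := (mul_pos two_pos (GG_pos u)).ne'
    have hq : HasDerivAt (fun v => psiG v / (2 * GG v))
        ((-2 * u * psiG u * (2 * GG u) - psiG u * (2 * psiG u)) / (2 * GG u) ^ 2) u := by
      exact (psiG_hasDeriv u).div (by simpa using (GG_hasDeriv u).const_mul 2) hGu
    have hcomp := HasDerivAt.comp θ hq hinner
    have hF : HasDerivAt F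
        (1 + ((-2 * u * psiG u * (2 * GG u) - psiG u * (2 * psiG u)) / (2 * GG u) ^ 2) * 1)
        θ := by
      exact (hasDerivAt_id θ).add hcomp
    refine ⟨_, hF, ?_⟩
    have hB : (0:ℝ) < (2 * GG u) ^ 2 := pow_pos (mul_pos two_pos (GG_pos u)) 2
    rw [mul_one]
    have hK := KK_pos u
    have hlt : (-1 : ℝ) <
        (-2 * u * psiG u * (2 * GG u) - psiG u * (2 * psiG u)) / (2 * GG u) ^ 2 := by
      rw [lt_div_iff₀ hB]
      unfold KK at hK
      nlinarith
    linarith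
  have hFmono : StrictMono F := by
    apply strictMono_of_deriv_pos
    intro θ
    obtain ⟨d, hd, hdpos⟩ := hFderiv θ
    rw [hd.deriv]; exact hdpos
  have hFcont : Continuous F := by
    rw [continuous_iff_continuousAt]
    intro θ
    obtain ⟨d, hd, _⟩ := hFderiv θ
    exact hd.continuousAt
  -- F 0 > 0
  have hF0 : 0 < F 0 := by
    have h1 := psiG_pos (2 * x + 0)
    have h2 := GG_pos (2 * x + 0)
    have h3 : 0 < psiG (2 * x + 0) / (2 * GG (2 * x + 0)) := div_pos h1 (by linarith)
    simp only [hF_def]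
    linarith
  -- F θ₀ < 0 with θ₀ = -2x - 1/(2x)
  set θ₀ : ℝ := -(2 * x) - 1 / (2 * x) with hθ₀
  have hu₀ : 2 * x + θ₀ = -(1 / (2 * x)) := by rw [hθ₀]; ring
  have hFθ₀ : F θ₀ < 0 := by
    set u₀ : ℝ := 2 * x + θ₀ with hu₀def
    have hu₀v : u₀ = -(1 / (2 * x)) := hu₀
    have hG := GG_pos u₀
    have hψ := psiG_pos u₀
    have hM := MM_pos u₀
    unfold MM at hM
    have hu₀neg : u₀ < 0 := by
      have : 0 < 1 / (2 * x) := by positivity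
      rw [hu₀v]; linarith
    -- F θ₀ = θ₀ + ψ/(2G) < 0  ⟺  ψ < -θ₀ · 2G
    have hgoal : psiG u₀ < -θ₀ * (2 * GG u₀) := by
      have hx' : x ≠ 0 := hx.ne'
      have hprod : u₀ * (2 * x) = -1 := by rw [hu₀v]; field_simp
      have hθ₀x : θ₀ * (2 * x) = -(4 * x ^ 2) - 1 := by rw [hθ₀]; field_simp; ring
      have hux : u₀ * x = -(1/2) := by linarith
      have hsq : u₀ ^ 2 * x ^ 2 = 1/4 := by nlinarith [hux]
      have hkey : psiG u₀ * x < (4 * x ^ 2 + 1) * GG u₀ :=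
        key_ineq _ _ _ _ hG hx hM hux
      have he : -θ₀ * (2 * GG u₀) * x = (4 * x ^ 2 + 1) * GG u₀ := by
        linear_combination (-(GG u₀)) * hθ₀x
      exact key_ineq2 _ _ _ _ hx hkey he
    have h2G : (0:ℝ) < 2 * GG u₀ := by linarith
    have h4 : psiG u₀ / (2 * GG u₀) < -θ₀ := (div_lt_iff₀ h2G).2 hgoal
    simp only [hF_def, ← hu₀def]
    linarith
  -- existence by IVT
  have hθ₀0 : θ₀ ≤ 0 := by
    have : 0 < 1 / (2 * x) := by positivity
    rw [hθ₀]; linarith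
  have hmem : (0:ℝ) ∈ Set.Icc (F θ₀) (F 0) := ⟨hFθ₀.le, hF0.le⟩
  obtain ⟨θ, hθmem, hθ⟩ := intermediate_value_Icc hθ₀0 hFcont.continuousOn hmem
  refine ⟨θ, ?_, ?_⟩
  · show θ + (1 / Real.sqrt Real.pi) *
        (Real.exp (-(2 * x + θ) ^ 2) / (1 + erf (2 * x + θ))) = 0
    rw [hFeq]; exact hθ
  · intro θ' hθ'
    have hθ'2 : F θ' = 0 := by
      rw [← hFeq]
      exact hθ'
    exact hFmono.injective (by rw [hθ'2, hθ])
end
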